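/- Let H be a loopless multigraph on a finite vertex set with at least one edge. Then corefan(H) = max over all nonempty full-multiplicity subgraphs K of H of min{cdeg_{H,K}(x,y) : μ_K(x,y) ≥ 1}. -/

import Mathlib

structure Multigraph (V : Type*) where
  mu : V → V → ℕ
  symm : ∀ u v, mu u v = mu v u
  loopless : ∀ v, mu v v = 0

namespace Multigraph

variable {V : Type*} [Fintype V]

/-- The degree of a vertex: number of incident edges. -/
def deg (G : Multigraph V) (v : V) : ℕ := ∑ u, G.mu v u

/-- The maximum degree Δ(G). -/
def maxDeg (G : Multigraph V) : ℕ := Finset.univ.sup (deg G)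

/-- The local multiplicity μ_G(v). -/
def locMult (G : Multigraph V) (v : V) : ℕ := Finset.univ.sup (G.mu v)

end Multigraph

namespace Multigraph

variable {V : Type*} [Fintype V]

/-- K is a subgraph of H (same vertex set, smaller multiplicities). -/
def IsSubgraph (K H : Multigraph V) : Prop := ∀ u v, K.mu u v ≤ H.mu u v

/-- K has at least one edge. -/
def HasEdge (K : Multigraph V) : Prop := ∃ u v, 1 ≤ K.mu u v

/-- The cfan degree cdeg_{H,K}(x,y): least l such that
∑_{z∈Z}(d_K(z) − d_H(z) + μ_K(x,z) − l) ≤ 1 for every Z ⊆ N_K(x) with y ∈ Z. -/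
noncomputable def cdeg (H K : Multigraph V) (x y : V) : ℕ :=
  sInf { l : ℕ | ∀ Z : Finset V, (∀ z ∈ Z, 1 ≤ K.mu x z) → y ∈ Z →
    ∑ z ∈ Z, ((K.deg z : ℤ) - (H.deg z : ℤ) + (K.mu x z : ℤ) - (l : ℤ)) ≤ 1 }

/-- The cfan number corefan(H): max over nonempty subgraphs K of H of the min of
cdeg_{H,K}(x,y) over edges xy of K (0 if H is edgeless). -/
noncomputable def corefan (H : Multigraph V) : ℕ :=
  sSup { n | ∃ K : Multigraph V, IsSubgraph K H ∧ HasEdge K ∧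
    n = sInf { m | ∃ x y, 1 ≤ K.mu x y ∧ m = cdeg H K x y } }

end Multigraph

namespace Multigraph

variable {V : Type*} [Fintype V]

/-- K is a full-multiplicity subgraph of H: each edge kept keeps all its copies. -/
def FullMult (K H : Multigraph V) : Prop := ∀ u v, K.mu u v = 0 ∨ K.mu u v = H.mu u v

end Multigraph

namespace MGAux

open Multigraph

variable {V : Type*} [Fintype V]

lemma mu_le_deg (H : Multigraph V) (x u : V) : H.mu x u ≤ H.deg x :=
  Finset.single_le_sum (fun _ _ => Nat.zero_le _) (Finset.mem_univ u)

lemma deg_le_maxDeg (H : Multigraph V) (x : V) : H.deg x ≤ H.maxDeg :=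
  Finset.le_sup (Finset.mem_univ x)

lemma deg_mono {K H : Multigraph V} (h : IsSubgraph K H) (z : V) : K.deg z ≤ H.deg z :=
  Finset.sum_le_sum fun u _ => h z u

lemma mem_cdeg_set {K H : Multigraph V} (h : IsSubgraph K H) (x : V) :
    (H.deg x) ∈ { l : ℕ | ∀ Z : Finset V, (∀ z ∈ Z, 1 ≤ K.mu x z) → True →
      ∑ z ∈ Z, ((K.deg z : ℤ) - (H.deg z : ℤ) + (K.mu x z : ℤ) - ((H.deg x : ℕ) : ℤ)) ≤ 1 } := by
  intro Z hZ _
  calc ∑ z ∈ Z, ((K.deg z : ℤ) - (H.deg z : ℤ) + (K.mu x z : ℤ) - ((H.deg x : ℕ) : ℤ))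
      ≤ ∑ _z ∈ Z, (0 : ℤ) := by
        apply Finset.sum_le_sum
        intro z hz
        have h1 : (K.deg z : ℤ) ≤ (H.deg z : ℤ) := by exact_mod_cast deg_mono h z
        have h2 : (K.mu x z : ℤ) ≤ (H.deg x : ℤ) := by
          exact_mod_cast le_trans (h x z) (mu_le_deg H x z)
        linarith
    _ = 0 := Finset.sum_const_zero
    _ ≤ 1 := by norm_num

lemma cdeg_le {K H : Multigraph V} (h : IsSubgraph K H) (x y : V) :
    cdeg H K x y ≤ H.deg x := by
  apply Nat.sInf_le
  intro Z hZ _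
  exact mem_cdeg_set h x Z hZ trivial

lemma cdeg_mono {K K' H : Multigraph V} (hKK' : IsSubgraph K K') (h' : IsSubgraph K' H)
    (x y : V) : cdeg H K x y ≤ cdeg H K' x y := by
  apply csInf_le_csInf (OrderBot.bddBelow _)
  · exact ⟨H.deg x, fun Z hZ _ => mem_cdeg_set h' x Z hZ trivial⟩
  · intro l hl Z hZ hy
    have hZ' : ∀ z ∈ Z, 1 ≤ K'.mu x z := fun z hz => le_trans (hZ z hz) (hKK' x z)
    calc ∑ z ∈ Z, ((K.deg z : ℤ) - (H.deg z : ℤ) + (K.mu x z : ℤ) - (l : ℤ))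
        ≤ ∑ z ∈ Z, ((K'.deg z : ℤ) - (H.deg z : ℤ) + (K'.mu x z : ℤ) - (l : ℤ)) := by
          apply Finset.sum_le_sum
          intro z hz
          have h1 : (K.deg z : ℤ) ≤ (K'.deg z : ℤ) := by exact_mod_cast deg_mono hKK' z
          have h2 : (K.mu x z : ℤ) ≤ (K'.mu x z : ℤ) := by exact_mod_cast hKK' x z
          linarith
      _ ≤ 1 := hl Z hZ' hy

/-- Complete a subgraph to full multiplicity. -/
def completion (K H : Multigraph V) : Multigraph V where
  mu u v := if K.mu u v = 0 then 0 else H.mu u v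
  symm u v := by rw [K.symm u v, H.symm u v]
  loopless v := by simp [K.loopless]

lemma completion_isSubgraph (K H : Multigraph V) : IsSubgraph (completion K H) H := by
  intro u v
  unfold completion
  by_cases h : K.mu u v = 0 <;> simp [h]

lemma le_completion {K H : Multigraph V} (h : IsSubgraph K H) :
    IsSubgraph K (completion K H) := by
  intro u v
  unfold completion
  by_cases hc : K.mu u v = 0 <;> simp [hc, h u v]

lemma completion_fullMult (K H : Multigraph V) : FullMult (completion K H) H := by
  intro u v
  unfold completion
  by_cases h : K.mu u v = 0 <;> simp [h]

lemma completion_edge_iff {K H : Multigraph V} (h : IsSubgraph K H) (u v : V) :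
    1 ≤ (completion K H).mu u v ↔ 1 ≤ K.mu u v := by
  unfold completion
  by_cases hc : K.mu u v = 0
  · simp [hc]
  · simp only [hc, if_false]
    have := h u v
    omega

lemma sInf_le_maxDeg {K H : Multigraph V} (hKH : IsSubgraph K H) (hKE : HasEdge K) :
    sInf {m | ∃ x y, 1 ≤ K.mu x y ∧ m = cdeg H K x y} ≤ H.maxDeg := by
  obtain ⟨x, y, hxy⟩ := hKE
  exact le_trans (Nat.sInf_le ⟨x, y, hxy, rfl⟩)
    (le_trans (cdeg_le hKH x y) (deg_le_maxDeg H x))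

end MGAux

open Multigraph in
/-- Lemma: corefan(H) is attained over full-multiplicity subgraphs. -/
theorem stmt6 {V : Type*} [Fintype V] (H : Multigraph V) (hE : H.HasEdge) :
    H.corefan = sSup { n | ∃ K : Multigraph V, IsSubgraph K H ∧ FullMult K H ∧ HasEdge K ∧
      n = sInf { m | ∃ x y, 1 ≤ K.mu x y ∧ m = cdeg H K x y } } := by
  classical
  have hBddS : BddAbove { n | ∃ K : Multigraph V, IsSubgraph K H ∧ HasEdge K ∧
      n = sInf { m | ∃ x y, 1 ≤ K.mu x y ∧ m = cdeg H K x y } } := by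
    refine ⟨H.maxDeg, ?_⟩
    rintro n ⟨K, hKH, hKE, rfl⟩
    exact MGAux.sInf_le_maxDeg hKH hKE
  have hBddS' : BddAbove { n | ∃ K : Multigraph V, IsSubgraph K H ∧ FullMult K H ∧ HasEdge K ∧
      n = sInf { m | ∃ x y, 1 ≤ K.mu x y ∧ m = cdeg H K x y } } := by
    refine ⟨H.maxDeg, ?_⟩
    rintro n ⟨K, hKH, _, hKE, rfl⟩
    exact MGAux.sInf_le_maxDeg hKH hKE
  apply le_antisymm
  · unfold corefan
    apply csSup_le
    · exact ⟨_, H, fun u v => le_refl _, hE, rfl⟩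
    · rintro n ⟨K, hKH, hKE, rfl⟩
      set K' := MGAux.completion K H with hK'def
      have hK'H := MGAux.completion_isSubgraph K H
      have hKK' := MGAux.le_completion hKH
      have hK'E : HasEdge K' := by
        obtain ⟨u, v, huv⟩ := hKE
        exact ⟨u, v, le_trans huv (hKK' u v)⟩
      have hstep : sInf {m | ∃ x y, 1 ≤ K.mu x y ∧ m = cdeg H K x y}
          ≤ sInf {m | ∃ x y, 1 ≤ K'.mu x y ∧ m = cdeg H K' x y} := by
        apply le_csInf
        · obtain ⟨u, v, huv⟩ := hK'E
          exact ⟨_, u, v, huv, rfl⟩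
        · rintro m ⟨x, y, hxy, rfl⟩
          have hxyK : 1 ≤ K.mu x y := (MGAux.completion_edge_iff hKH x y).mp hxy
          calc sInf {m | ∃ x y, 1 ≤ K.mu x y ∧ m = cdeg H K x y}
              ≤ cdeg H K x y := Nat.sInf_le ⟨x, y, hxyK, rfl⟩
            _ ≤ cdeg H K' x y := MGAux.cdeg_mono hKK' hK'H x y
      exact le_trans hstep
        (le_csSup hBddS' ⟨K', hK'H, MGAux.completion_fullMult K H, hK'E, rfl⟩)
  · apply csSup_le_csSup hBddS
    · exact ⟨_, H, fun u v => le_refl _, fun u v => Or.inr rfl, hE, rfl⟩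
    · rintro n ⟨K, hKH, _, hKE, rfl⟩
      exact ⟨K, hKH, hKE, rfl⟩
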